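/- Let C ⊆ F_{q^m}^n be a linear MRD code of dimension k over F_{q^m}, where k = 1 or k = n − 1 (and 1 ≤ k ≤ n). Then C is a Gabidulin code: there exist g_1, …, g_n ∈ F_{q^m} linearly independent over F_q such that C is the F_{q^m}-span of the k Moore vectors (g_1^{q^i}, …, g_n^{q^i}) for i = 0, …, k − 1. -/

import Mathlib

set_option linter.unusedSectionVars false
set_option linter.unusedVariables false
set_option maxHeartbeats 1000000


open Matrix Polynomial Module

/-- The rank over the subfield `Fq` of a vector with entries in `K`:
the `Fq`-dimension of the `Fq`-span of its coordinates. -/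
noncomputable def rankQ (Fq : Type) {K : Type} [Field Fq] [Field K] [Algebra Fq K] {n : ℕ}
    (v : Fin n → K) : ℕ :=
  Module.finrank Fq (Submodule.span Fq (Set.range v))

/-- The minimum rank distance of a linear rank-metric code `C ⊆ K^n`. -/
noncomputable def minRankDist (Fq : Type) {K : Type} [Field Fq] [Field K] [Algebra Fq K] {n : ℕ}
    (C : Submodule K (Fin n → K)) : ℕ :=
  sInf (rankQ Fq '' {c : Fin n → K | c ∈ C ∧ c ≠ 0})

/-- A linear code `C ⊆ K^n` of dimension `k` over `K` is MRD if its minimum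
rank distance equals `n - k + 1`. -/
def IsMRD (Fq : Type) {K : Type} [Field Fq] [Field K] [Algebra Fq K] {n : ℕ}
    (C : Submodule K (Fin n → K)) (k : ℕ) : Prop :=
  Module.finrank K C = k ∧ minRankDist Fq C = n - k + 1

/-- `G` is a generator matrix of `C`: its rows form a `K`-basis of `C`. -/
def IsGenMat {K : Type} [Field K] {k n : ℕ} (C : Submodule K (Fin n → K))
    (G : Matrix (Fin k) (Fin n) K) : Prop :=
  LinearIndependent K (fun i => G i) ∧ Submodule.span K (Set.range fun i => G i) = C

section GabidulinAux

variable {Fq K : Type} [Field Fq] [Fintype Fq] [Field K] [Fintype K] [Algebra Fq K] {q : ℕ}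


variable {Fq K : Type} [Field Fq] [Fintype Fq] [Field K] [Fintype K] [Algebra Fq K] {q : ℕ}

lemma two_le_q (hq : Fintype.card Fq = q) : 2 ≤ q := hq ▸ Fintype.one_lt_card

lemma exists_frobQ (hq : Fintype.card Fq = q) (t : ℕ) :
    ∃ F : K →+* K, ∀ x, F x = x ^ q ^ t := by
  haveI : CharP Fq (ringChar Fq) := ringChar.charP Fq
  obtain ⟨e, hp, hcard⟩ := FiniteField.card Fq (ringChar Fq)
  haveI : CharP K (ringChar Fq) :=
    charP_of_injective_algebraMap (algebraMap Fq K).injective (ringChar Fq)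
  haveI : ExpChar K (ringChar Fq) := ExpChar.prime hp
  refine ⟨iterateFrobenius K (ringChar Fq) (e * t), fun x => ?_⟩
  rw [iterateFrobenius_def, pow_mul, ← hcard, hq]

lemma frobQ_fq (hq : Fintype.card Fq = q) (t : ℕ) (c : Fq) :
    (algebraMap Fq K c) ^ q ^ t = algebraMap Fq K c := by
  rw [← map_pow]
  congr 1
  rw [← hq]
  exact FiniteField.pow_card_pow t c

lemma frobQ_inj (hq : Fintype.card Fq = q) (t : ℕ) :
    Function.Injective (fun x : K => x ^ q ^ t) := by
  obtain ⟨F, hF⟩ := exists_frobQ (K := K) hq t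
  simpa [← hF] using F.injective

lemma frobQ_surj (hq : Fintype.card Fq = q) (t : ℕ) :
    Function.Surjective (fun x : K => x ^ q ^ t) :=
  Finite.injective_iff_surjective.mp (frobQ_inj hq t)

lemma frobQ_add (hq : Fintype.card Fq = q) (t : ℕ) (x y : K) :
    (x + y) ^ q ^ t = x ^ q ^ t + y ^ q ^ t := by
  obtain ⟨F, hF⟩ := exists_frobQ (K := K) hq t
  rw [← hF, ← hF, ← hF, map_add]

lemma frobQ_sum (hq : Fintype.card Fq = q) (t : ℕ) {ι : Type*} (s : Finset ι) (f : ι → K) :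
    (∑ i ∈ s, f i) ^ q ^ t = ∑ i ∈ s, (f i) ^ q ^ t := by
  obtain ⟨F, hF⟩ := exists_frobQ (K := K) hq t
  simp only [← hF, map_sum]

lemma frobQ_smul (hq : Fintype.card Fq = q) (t : ℕ) (c : Fq) (x : K) :
    (c • x) ^ q ^ t = c • x ^ q ^ t := by
  rw [Algebra.smul_def, mul_pow, frobQ_fq hq, Algebra.smul_def]

/-- A `q`-polynomial of `q`-degree `< n` vanishing on `n` `Fq`-linearly independent
points has all coefficients zero. -/
lemma qpoly_zero (hq : Fintype.card Fq = q) {n : ℕ} {h : Fin n → K}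
    (hh : LinearIndependent Fq h) (a : Fin n → K)
    (hz : ∀ j, ∑ i : Fin n, a i * h j ^ q ^ (i : ℕ) = 0) : a = 0 := by
  classical
  rcases Nat.eq_zero_or_pos n with rfl | hn
  · funext i; exact i.elim0
  have hq2 : 2 ≤ q := two_le_q hq
  -- the evaluation map is `Fq`-linear
  let L : K →ₗ[Fq] K :=
    { toFun := fun x => ∑ i : Fin n, a i * x ^ q ^ (i : ℕ)
      map_add' := fun x y => by
        rw [← Finset.sum_add_distrib]
        exact Finset.sum_congr rfl fun i _ => by rw [frobQ_add hq, mul_add]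
      map_smul' := fun c x => by
        simp only [RingHom.id_apply, Finset.smul_sum]
        exact Finset.sum_congr rfl fun i _ => by rw [frobQ_smul hq, mul_smul_comm] }
  have hker : Submodule.span Fq (Set.range h) ≤ LinearMap.ker L := by
    rw [Submodule.span_le]
    rintro _ ⟨j, rfl⟩
    exact LinearMap.mem_ker.mpr (hz j)
  set V := Submodule.span Fq (Set.range h) with hV
  let P : Polynomial K := ∑ i : Fin n, Polynomial.C (a i) * Polynomial.X ^ q ^ (i : ℕ)
  have hPeval : ∀ x ∈ V, P.eval x = 0 := by
    intro x hx
    have : L x = 0 := hker hx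
    simpa [P, Polynomial.eval_finset_sum, L] using this
  haveI : Fintype V := Fintype.ofFinite V
  have hcardV : Fintype.card V = q ^ n := by
    rw [card_eq_pow_finrank (K := Fq) (V := V), hq, hV, finrank_span_eq_card hh,
      Fintype.card_fin]
  have hdeg : P.natDegree < q ^ n := by
    have h1 : P.natDegree ≤ q ^ (n - 1) := by
      refine Polynomial.natDegree_sum_le_of_forall_le _ _ fun i _ => ?_
      refine le_trans (Polynomial.natDegree_C_mul_le _ _) ?_
      rw [Polynomial.natDegree_X_pow]
      exact Nat.pow_le_pow_right (by omega) (by omega)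
    exact lt_of_le_of_lt h1 (Nat.pow_lt_pow_right hq2 (by omega))
  have hP0 : P = 0 := by
    refine Polynomial.eq_zero_of_natDegree_lt_card_of_eval_eq_zero P
      (f := (Subtype.val : V → K)) Subtype.val_injective (fun v => hPeval v v.2) ?_
    rw [hcardV]; exact hdeg
  funext i
  have hcoeff : P.coeff (q ^ (i : ℕ)) = a i := by
    simp only [P, Polynomial.finset_sum_coeff, Polynomial.coeff_C_mul, Polynomial.coeff_X_pow]
    rw [Finset.sum_eq_single i]
    · simp
    · intro b _ hb
      rw [if_neg, mul_zero]
      exact fun hpow => hb (Fin.ext (Nat.pow_right_injective hq2 hpow.symm))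
    · intro hi; exact absurd (Finset.mem_univ i) hi
  rw [hP0, Polynomial.coeff_zero] at hcoeff
  exact hcoeff.symm

/-- Given `n` `Fq`-linearly independent elements `h`, there is an `Fq`-linearly independent
vector `g` whose Moore vectors of exponents `0, …, n-2` are all orthogonal to `h`. -/
lemma exists_gab_dual (hq : Fintype.card Fq = q) {n : ℕ} (hn : 0 < n) {h : Fin n → K}
    (hh : LinearIndependent Fq h) :
    ∃ g : Fin n → K, LinearIndependent Fq g ∧
      ∀ i : ℕ, i + 1 < n → ∑ j, h j * g j ^ q ^ i = 0 := by
  classical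
  have hq2 : 2 ≤ q := two_le_q hq
  set z : Fin n := ⟨0, hn⟩ with hz
  set r : Fin n → (Fin n → K) := fun s j => h j ^ q ^ (s : ℕ) with hr
  have hr_li : LinearIndependent K r := by
    rw [Fintype.linearIndependent_iff]
    intro a ha
    have ha' : ∀ j, ∑ i : Fin n, a i * h j ^ q ^ (i : ℕ) = 0 := by
      intro j
      have := congrFun ha j
      simpa [hr, Finset.sum_apply] using this
    have := qpoly_zero hq hh a ha'
    intro i; exact congrFun this i
  haveI : Nonempty (Fin n) := ⟨z⟩
  have hr_top : Submodule.span K (Set.range r) = ⊤ :=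
    hr_li.span_eq_top_of_card_eq_finrank (by simp [Module.finrank_fintype_fun_eq_card])
  have hdot : ∀ y : Fin n → K, (∀ s, ∑ j, r s j * y j = 0) → y = 0 := by
    intro y hy
    have hall : ∀ x : Fin n → K, ∑ j, x j * y j = 0 := by
      intro x
      have hx : x ∈ Submodule.span K (Set.range r) := by rw [hr_top]; trivial
      induction hx using Submodule.span_induction with
      | mem x hx => obtain ⟨s, rfl⟩ := hx; exact hy s
      | zero => simp
      | add x₁ x₂ _ _ h1 h2 => simp [add_mul, Finset.sum_add_distrib, h1, h2]
      | smul c x _ hx =>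
          simp only [Pi.smul_apply, smul_eq_mul, mul_assoc, ← Finset.mul_sum, hx, mul_zero]
    funext j
    have := hall (Pi.single j 1)
    simpa [Pi.single_apply, ite_mul, one_mul, zero_mul, Finset.sum_ite_eq'] using this
  set A : (Fin n → K) →ₗ[K] (Fin n → K) := (Matrix.of r).mulVecLin with hA
  have hA_inj : Function.Injective A := by
    rw [← LinearMap.ker_eq_bot, Submodule.eq_bot_iff]
    intro y hy
    refine hdot y fun s => ?_
    have := congrFun (LinearMap.mem_ker.mp hy) s
    simpa [hA, Matrix.mulVecLin_apply, Matrix.mulVec, dotProduct] using this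
  obtain ⟨u, hu⟩ := (LinearMap.injective_iff_surjective.mp hA_inj) (Pi.single z 1)
  have hu' : ∀ s : Fin n, ∑ j, h j ^ q ^ (s:ℕ) * u j = if s = z then 1 else 0 := by
    intro s
    have := congrFun hu s
    simpa [hA, Matrix.mulVecLin_apply, Matrix.mulVec, dotProduct, hr,
      Pi.single_apply] using this
  -- `u` is `Fq`-linearly independent
  have hu_li : LinearIndependent Fq u := by
    rw [Fintype.linearIndependent_iff]
    intro lam hlam
    by_contra hcon
    push_neg at hcon
    obtain ⟨i0, hi0⟩ := hcon
    set w : Fin n → K := fun j => algebraMap Fq K (lam j) with hw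
    have hw0 : ∑ j, w j * u j = 0 := by
      rw [← hlam]
      exact Finset.sum_congr rfl fun j _ => by rw [hw, Algebra.smul_def]
    have hw_mem : w ∈ Submodule.span K (Set.range r) := by rw [hr_top]; trivial
    obtain ⟨c, hc⟩ := (Submodule.mem_span_range_iff_exists_fun K).mp hw_mem
    have e3 : ∀ j, ∑ s : Fin n, c s * h j ^ q ^ (s:ℕ) = w j := by
      intro j
      have := congrFun hc j
      simpa [hr, Finset.sum_apply, smul_eq_mul] using this
    set c' : ℕ → K := fun t => if ht : t < n then c ⟨t, ht⟩ else 0 with hc'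
    have hc'lt : ∀ s : Fin n, c' (s : ℕ) = c s := by
      intro s; simp [hc', s.isLt]
    have hwj : ∀ j, w j = ∑ t ∈ Finset.range n, c' t * h j ^ q ^ t := by
      intro j
      rw [← e3 j, ← Fin.sum_univ_eq_sum_range (fun t => c' t * h j ^ q ^ t) n]
      exact Finset.sum_congr rfl fun s _ => by rw [hc'lt s]
    have hc0 : c z = 0 := by
      have e5 : ∑ s : Fin n, c s * (∑ j, h j ^ q ^ (s:ℕ) * u j) = c z := by
        simp only [hu', mul_ite, mul_one, mul_zero]
        simp [Finset.sum_ite_eq']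
      have e6 : ∑ s : Fin n, c s * (∑ j, h j ^ q ^ (s:ℕ) * u j)
          = ∑ j, (∑ s : Fin n, c s * h j ^ q ^ (s:ℕ)) * u j := by
        simp only [Finset.mul_sum, Finset.sum_mul]
        rw [Finset.sum_comm]
        exact Finset.sum_congr rfl fun j _ => Finset.sum_congr rfl fun s _ => by ring
      calc c z = ∑ s : Fin n, c s * (∑ j, h j ^ q ^ (s:ℕ) * u j) := e5.symm
        _ = ∑ j, (∑ s : Fin n, c s * h j ^ q ^ (s:ℕ)) * u j := e6
        _ = ∑ j, w j * u j := Finset.sum_congr rfl fun j _ => by rw [e3 j]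
        _ = 0 := hw0
    have hc'0 : c' 0 = 0 := by
      have : c' 0 = c z := hc'lt z
      rw [this, hc0]
    -- the step relation, via `qpoly_zero` at the points `h^q`
    have hstep : ∀ t : ℕ, c' t ^ q = c' (t + 1) := by
      set y : Fin n → K := fun j => h j ^ q with hy
      have hy_li : LinearIndependent Fq y := by
        rw [Fintype.linearIndependent_iff]
        intro mu hmu
        have e7 : (∑ j, mu j • h j) ^ q ^ 1 = ∑ j, mu j • y j := by
          rw [frobQ_sum hq]
          exact Finset.sum_congr rfl fun j _ => by
            rw [frobQ_smul hq, pow_one]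
        have h0 : (∑ j, mu j • h j) = 0 := by
          apply frobQ_inj hq 1
          show (∑ j, mu j • h j) ^ q ^ 1 = (0:K) ^ q ^ 1
          rw [e7, hmu, zero_pow (pow_ne_zero 1 (by omega : q ≠ 0))]
        exact Fintype.linearIndependent_iff.mp hh mu h0
      set d : Fin n → K := fun s => c' (s:ℕ) ^ q - c' ((s:ℕ) + 1) with hd
      have hdz : ∀ j, ∑ s : Fin n, d s * y j ^ q ^ (s:ℕ) = 0 := by
        intro j
        have hyp : ∀ t : ℕ, y j ^ q ^ t = h j ^ q ^ (t+1) := by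
          intro t
          rw [hy]
          show (h j ^ q) ^ q ^ t = h j ^ q ^ (t + 1)
          rw [← pow_mul, ← pow_succ']
        have first : ∑ t ∈ Finset.range n, c' t ^ q * h j ^ q ^ (t+1) = w j := by
          have e4 : ∀ t : ℕ, c' t ^ q * h j ^ q ^ (t+1) = (c' t * h j ^ q ^ t) ^ q ^ 1 := by
            intro t
            rw [pow_one, mul_pow, ← pow_mul, ← pow_succ]
          calc ∑ t ∈ Finset.range n, c' t ^ q * h j ^ q ^ (t+1)
              = ∑ t ∈ Finset.range n, (c' t * h j ^ q ^ t) ^ q ^ 1 :=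
                Finset.sum_congr rfl fun t _ => e4 t
            _ = (∑ t ∈ Finset.range n, c' t * h j ^ q ^ t) ^ q ^ 1 := (frobQ_sum hq 1 _ _).symm
            _ = (w j) ^ q ^ 1 := by rw [← hwj j]
            _ = w j := frobQ_fq hq 1 (lam j)
        have second : ∑ t ∈ Finset.range n, c' (t+1) * h j ^ q ^ (t+1) = w j := by
          have hs' := Finset.sum_range_succ' (fun t => c' t * h j ^ q ^ t) n
          have hsr := Finset.sum_range_succ (fun t => c' t * h j ^ q ^ t) n
          have hcn : c' n = 0 := dif_neg (by omega)
          have key : (∑ t ∈ Finset.range n, c' (t+1) * h j ^ q ^ (t+1)) + c' 0 * h j ^ q ^ 0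
              = (∑ t ∈ Finset.range n, c' t * h j ^ q ^ t) + c' n * h j ^ q ^ n := by
            rw [← hs']; exact hsr
          rw [hcn, hc'0, zero_mul, zero_mul, add_zero, add_zero] at key
          rw [key, ← hwj j]
        calc ∑ s : Fin n, d s * y j ^ q ^ (s:ℕ)
            = ∑ t ∈ Finset.range n,
                (c' t ^ q * h j ^ q ^ (t+1) - c' (t+1) * h j ^ q ^ (t+1)) := by
              rw [← Fin.sum_univ_eq_sum_range
                (fun t => c' t ^ q * h j ^ q ^ (t+1) - c' (t+1) * h j ^ q ^ (t+1)) n]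
              exact Finset.sum_congr rfl fun s _ => by rw [hd]; simp only; rw [hyp, sub_mul]
          _ = (∑ t ∈ Finset.range n, c' t ^ q * h j ^ q ^ (t+1))
              - ∑ t ∈ Finset.range n, c' (t+1) * h j ^ q ^ (t+1) := Finset.sum_sub_distrib _ _
          _ = 0 := by rw [first, second, sub_self]
      have hd0 : d = 0 := qpoly_zero hq hy_li d hdz
      intro t
      by_cases ht : t < n
      · have := congrFun hd0 ⟨t, ht⟩
        simp only [hd, Pi.zero_apply] at this
        exact sub_eq_zero.mp this
      · have h1 : c' t = 0 := dif_neg ht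
        have h2 : c' (t+1) = 0 := dif_neg (by omega)
        rw [h1, h2, zero_pow (by omega : q ≠ 0)]
    have hiter : ∀ t s : ℕ, c' s ^ q ^ t = c' (s + t) := by
      intro t
      induction t with
      | zero => intro s; simp
      | succ t ih =>
          intro s
          rw [pow_succ, pow_mul, ih s, hstep, Nat.add_assoc]
    have hczero : ∀ s : Fin n, c s = 0 := by
      intro s
      have h1 : c' (s:ℕ) ^ q ^ (n - (s:ℕ)) = 0 := by
        rw [hiter, (by omega : (s:ℕ) + (n - (s:ℕ)) = n)]
        exact dif_neg (by omega)
      have h2 : c' (s:ℕ) = 0 :=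
        (pow_eq_zero_iff (pow_ne_zero _ (by omega : q ≠ 0))).mp h1
      rw [← hc'lt s]; exact h2
    have hwzero : w = 0 := by
      rw [← hc]
      exact Finset.sum_eq_zero fun s _ => by rw [hczero s, zero_smul]
    apply hi0
    have := congrFun hwzero i0
    simpa [hw] using this
  -- construct `g` by extracting `q^(n-1)`-th roots of `u`
  choose g hg using fun j => frobQ_surj (K := K) hq (n-1) (u j)
  simp only at hg
  refine ⟨g, ?_, ?_⟩
  · rw [Fintype.linearIndependent_iff]
    intro mu hmu
    have h0 : ∑ j, mu j • u j = 0 := by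
      have e8 : (∑ j, mu j • g j) ^ q ^ (n-1) = 0 := by
        rw [hmu, zero_pow (pow_ne_zero _ (by omega : q ≠ 0))]
      rw [frobQ_sum hq] at e8
      calc ∑ j, mu j • u j = ∑ j, (mu j • g j) ^ q ^ (n-1) := by
            refine Finset.sum_congr rfl fun j _ => ?_
            rw [frobQ_smul hq, hg j]
        _ = 0 := e8
    exact Fintype.linearIndependent_iff.mp hu_li mu h0
  · intro i hi
    have hsum : (∑ j, h j * g j ^ q ^ i) ^ q ^ (n - 1 - i) = 0 := by
      rw [frobQ_sum hq]
      have e9 : ∀ j, (h j * g j ^ q ^ i) ^ q ^ (n-1-i) = h j ^ q ^ (n-1-i) * u j := by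
        intro j
        rw [mul_pow, ← pow_mul, ← pow_add, (by omega : i + (n - 1 - i) = n - 1), hg j]
      rw [Finset.sum_congr rfl fun j _ => e9 j]
      have h10 := hu' ⟨n - 1 - i, by omega⟩
      rw [if_neg (by rw [hz, Fin.ext_iff]; simp; omega)] at h10
      exact h10
    apply frobQ_inj hq (n - 1 - i)
    show (∑ j, h j * g j ^ q ^ i) ^ q ^ (n-1-i) = (0:K) ^ q ^ (n-1-i)
    rw [hsum, zero_pow (pow_ne_zero _ (by omega : q ≠ 0))]


end GabidulinAux

/-- every linear MRD code of dimension `k = 1` or `k = n - 1`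
is a Gabidulin code. -/
theorem stmt12 {q m n k : ℕ} (Fq K : Type) [Field Fq] [Fintype Fq] [Field K] [Fintype K]
    [Algebra Fq K] (hq : Fintype.card Fq = q) (hK : Fintype.card K = q ^ m)
    (hk : 1 ≤ k) (hkn : k ≤ n) (hcase : k = 1 ∨ k = n - 1)
    (C : Submodule K (Fin n → K)) (hMRD : IsMRD Fq C k) :
    ∃ g : Fin n → K, LinearIndependent Fq g ∧
      C = Submodule.span K
        (Set.range fun i : Fin k => fun j : Fin n => (g j) ^ q ^ (i : ℕ)) := by
  classical
  obtain ⟨hfr, hmd⟩ := hMRD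
  rcases hcase with rfl | hkcase
  · -- k = 1
    have hCbot : C ≠ ⊥ := by
      intro hbot
      rw [hbot, finrank_bot] at hfr
      omega
    obtain ⟨c, hcC, hc0⟩ := Submodule.exists_mem_ne_zero_of_ne_bot hCbot
    have hmem : rankQ Fq c ∈ rankQ Fq '' {x : Fin n → K | x ∈ C ∧ x ≠ 0} :=
      ⟨c, ⟨hcC, hc0⟩, rfl⟩
    have hge : n ≤ rankQ Fq c := by
      have h1 := Nat.sInf_le hmem
      rw [minRankDist] at hmd
      omega
    have hle : rankQ Fq c ≤ n := by
      have := finrank_range_le_card (R := Fq) c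
      rw [rankQ]
      rw [Fintype.card_fin] at this
      exact this
    have hc_li : LinearIndependent Fq c := by
      rw [linearIndependent_iff_card_eq_finrank_span, Fintype.card_fin]
      show n = Set.finrank Fq (Set.range c)
      rw [Set.finrank]
      rw [rankQ] at hge hle
      omega
    have hCspan : C = Submodule.span K {c} := by
      refine (Submodule.eq_of_le_of_finrank_le ?_ ?_).symm
      · rw [Submodule.span_singleton_le_iff_mem]; exact hcC
      · rw [hfr, finrank_span_singleton hc0]
    refine ⟨c, hc_li, ?_⟩
    have hr1 : (Set.range fun i : Fin 1 => fun j : Fin n => c j ^ q ^ (i:ℕ)) = {c} := by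
      rw [Set.range_unique]
      have : (fun j : Fin n => c j ^ q ^ ((default : Fin 1) : ℕ)) = c := by
        funext j
        norm_num
      rw [this]
    rw [hCspan, hr1]
  · -- k = n - 1
    have hn2 : 2 ≤ n := by omega
    subst hkcase
    haveI : FiniteDimensional Fq K := Module.finite_iff_finite.mpr inferInstance
    have hq1 : Module.finrank K ((Fin n → K) ⧸ C) = 1 := by
      have h1 := Submodule.finrank_quotient_add_finrank C
      rw [hfr, Module.finrank_fintype_fun_eq_card, Fintype.card_fin] at h1
      omega
    obtain ⟨φ⟩ := FiniteDimensional.nonempty_linearEquiv_of_finrank_eq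
      (show Module.finrank K ((Fin n → K) ⧸ C) = Module.finrank K K by
        rw [hq1, finrank_self])
    set f : (Fin n → K) →ₗ[K] K := φ.toLinearMap ∘ₗ C.mkQ with hf
    have hker : LinearMap.ker f = C := by
      rw [hf, LinearMap.ker_comp, LinearEquiv.ker, Submodule.comap_bot, Submodule.ker_mkQ]
    set h : Fin n → K := fun j => f (Pi.single j 1) with hh'
    have hfx : ∀ x : Fin n → K, f x = ∑ j, x j * h j := by
      intro x
      conv_lhs => rw [← Finset.univ_sum_single x]
      rw [map_sum]
      refine Finset.sum_congr rfl fun j _ => ?_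
      have e1 : Pi.single j (x j) = x j • (Pi.single j 1 : Fin n → K) := by
        funext j'
        by_cases hjj : j' = j <;> simp [Pi.single_apply, hjj]
      rw [e1, f.map_smul, smul_eq_mul]
    have hmemC : ∀ x : Fin n → K, x ∈ C ↔ ∑ j, x j * h j = 0 := by
      intro x; rw [← hker, LinearMap.mem_ker, hfx]
    have hmd2 : minRankDist Fq C = 2 := by rw [hmd]; congr 1; omega
    have hh_li : LinearIndependent Fq h := by
      rw [Fintype.linearIndependent_iff]
      intro lam hlam
      by_contra hcon
      push_neg at hcon
      obtain ⟨i0, hi0⟩ := hcon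
      set cvec : Fin n → K := fun j => algebraMap Fq K (lam j) with hcvec
      have hcC : cvec ∈ C := by
        rw [hmemC]
        calc ∑ j, cvec j * h j = ∑ j, lam j • h j :=
              Finset.sum_congr rfl fun j _ => (Algebra.smul_def _ _).symm
          _ = 0 := hlam
      have hcne : cvec ≠ 0 := by
        intro hzero
        exact hi0 (by have := congrFun hzero i0; simpa [hcvec] using this)
      have hge2 : 2 ≤ rankQ Fq cvec := by
        have h1' : rankQ Fq cvec ∈ rankQ Fq '' {x : Fin n → K | x ∈ C ∧ x ≠ 0} :=
          ⟨cvec, ⟨hcC, hcne⟩, rfl⟩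
        have h1 := Nat.sInf_le h1'
        rw [minRankDist] at hmd2
        omega
      have hle1 : rankQ Fq cvec ≤ 1 := by
        rw [rankQ]
        have hsub : Submodule.span Fq (Set.range cvec) ≤ Submodule.span Fq {(1:K)} := by
          rw [Submodule.span_le]
          rintro _ ⟨j, rfl⟩
          have e2 : cvec j = lam j • (1:K) := by rw [Algebra.smul_def, mul_one]
          rw [e2]
          exact Submodule.smul_mem _ _ (Submodule.mem_span_singleton_self 1)
        have h3 := Submodule.finrank_mono hsub
        have h4 : Module.finrank Fq (Submodule.span Fq {(1:K)}) = 1 :=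
          finrank_span_singleton one_ne_zero
        omega
      omega
    obtain ⟨g, hg_li, hg_orth⟩ := exists_gab_dual hq (by omega : 0 < n) hh_li
    refine ⟨g, hg_li, ?_⟩
    set rg : Fin (n-1) → (Fin n → K) := fun i j => g j ^ q ^ (i:ℕ) with hrg
    have hrg_mem : ∀ i, rg i ∈ C := by
      intro i
      rw [hmemC]
      have h5 := hg_orth (i:ℕ) (by have := i.isLt; omega)
      calc ∑ j, rg i j * h j = ∑ j, h j * g j ^ q ^ (i:ℕ) :=
            Finset.sum_congr rfl fun j _ => mul_comm _ _
        _ = 0 := h5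
    have hrg_li : LinearIndependent K rg := by
      rw [Fintype.linearIndependent_iff]
      intro a ha
      set a'' : ℕ → K := fun t => if ht : t < n-1 then a ⟨t, ht⟩ else 0 with ha''
      have hz' : ∀ j, ∑ i : Fin n, a'' (i:ℕ) * g j ^ q ^ (i:ℕ) = 0 := by
        intro j
        rw [Fin.sum_univ_eq_sum_range (fun t => a'' t * g j ^ q ^ t) n]
        rw [← Finset.sum_subset (Finset.range_subset_range.mpr (by omega : n - 1 ≤ n))
          (fun t _ ht => by
            rw [ha'']
            simp only
            rw [dif_neg (by simpa using ht), zero_mul])]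
        rw [← Fin.sum_univ_eq_sum_range (fun t => a'' t * g j ^ q ^ t) (n-1)]
        have := congrFun ha j
        simp only [Finset.sum_apply, Pi.smul_apply, Pi.zero_apply, smul_eq_mul, hrg] at this
        rw [← this]
        refine Finset.sum_congr rfl fun i _ => ?_
        rw [ha'']
        simp only
        rw [dif_pos i.isLt]
      have h6 := qpoly_zero hq hg_li (fun i : Fin n => a'' (i:ℕ)) hz'
      intro i
      have h7 := congrFun h6 ⟨(i:ℕ), by have := i.isLt; omega⟩
      simp only [ha'', Pi.zero_apply] at h7
      rw [dif_pos i.isLt] at h7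
      simpa using h7
    have hspan_le : Submodule.span K (Set.range rg) ≤ C := by
      rw [Submodule.span_le]; rintro _ ⟨i, rfl⟩; exact hrg_mem i
    refine (Submodule.eq_of_le_of_finrank_le hspan_le ?_).symm
    rw [hfr, finrank_span_eq_card hrg_li, Fintype.card_fin]
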